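/- Every Lorenz expanding map f : [-1,1] \ {0} → (-1,1) is eventually onto: for every nonempty open interval J ⊆ [-1,1] \ {0} there exists an integer N > 0 such that ⋃_{i=0}^{N} f^i(J) ⊇ (-1,1). Here f^i(J) denotes the image of the set of points of J at which the i-th iterate of f is defined. -/

import Mathlib

open Set Filter Topology

/-- Core one-sided expansion lemma for a continuous map whose "slope defect"
`F x - √2 x` is strictly monotone on `[s,t]`. -/
lemma lorenz_side_core (F : ℝ → ℝ) (s t δ : ℝ) (hδ : 0 < δ) (hδt : δ ≤ t - s)
    (hcont : ContinuousOn F (Icc s t))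
    (hG : StrictMonoOn (fun x => F x - Real.sqrt 2 * x) (Icc s t)) :
    ∃ ε > 0, ∀ c d, s ≤ c → c < d → d ≤ t →
      (Real.sqrt 2 * (d - c) ≤ F d - F c) ∧
      (δ ≤ d - c → Real.sqrt 2 * (d - c) + ε ≤ F d - F c) ∧
      Ioo (F c) (F d) ⊆ F '' Ioo c d := by
  set G := fun x => F x - Real.sqrt 2 * x with hGdef
  have hst : s < t := by linarith
  have hGc : ContinuousOn G (Icc s t) :=
    hcont.sub ((continuous_const.mul continuous_id).continuousOn)
  have hsub : Icc s (t - δ) ⊆ Icc s t := Icc_subset_Icc le_rfl (by linarith)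
  have hφc : ContinuousOn (fun x => G (x + δ) - G x) (Icc s (t - δ)) := by
    refine ContinuousOn.sub ?_ (hGc.mono hsub)
    refine hGc.comp (continuous_id.add continuous_const).continuousOn ?_
    intro x hx
    simp only [mem_Icc] at hx ⊢
    constructor <;> linarith [hx.1, hx.2]
  have hne : (Icc s (t - δ)).Nonempty := ⟨s, le_rfl, by linarith⟩
  obtain ⟨x₀, hx₀, hmin⟩ := isCompact_Icc.exists_isMinOn hne hφc
  have hmem1 : x₀ ∈ Icc s t := hsub hx₀
  have hmem2 : x₀ + δ ∈ Icc s t := ⟨by linarith [hx₀.1], by linarith [hx₀.2]⟩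
  have hεpos : 0 < G (x₀ + δ) - G x₀ :=
    sub_pos.2 (hG hmem1 hmem2 (by linarith))
  refine ⟨G (x₀ + δ) - G x₀, hεpos, fun c d hsc hcd hdt => ?_⟩
  have hcm : c ∈ Icc s t := ⟨hsc, by linarith⟩
  have hdm : d ∈ Icc s t := ⟨by linarith, hdt⟩
  have hmono := hG.monotoneOn
  have h1 : G c ≤ G d := hmono hcm hdm hcd.le
  have hGc' : G c = F c - Real.sqrt 2 * c := rfl
  have hGd' : G d = F d - Real.sqrt 2 * d := rfl
  refine ⟨by rw [hGc', hGd'] at h1; linarith, fun hδcd => ?_, ?_⟩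
  · have hcmem : c ∈ Icc s (t - δ) := ⟨hsc, by linarith⟩
    have h4 : G (x₀ + δ) - G x₀ ≤ G (c + δ) - G c := hmin hcmem
    have h3 : G (c + δ) ≤ G d :=
      hmono ⟨by linarith, by linarith⟩ hdm (by linarith)
    simp only [hGdef] at h3 h4
    rw [hGc', hGd'] at h1
    simp only [hGdef]
    linarith
  · exact intermediate_value_Ioo hcd.le (hcont.mono (Icc_subset_Icc hsc hdt))


lemma lorenz_stepR (f f' : ℝ → ℝ)
    (hderiv : ∀ x ∈ Icc (-1:ℝ) 1 \ {0},
      HasDerivWithinAt f (f' x) (Icc (-1:ℝ) 1 \ {0}) x)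
    (hrange : ∀ x ∈ Icc (-1:ℝ) 1 \ {0}, f x ∈ Ioo (-1:ℝ) 1)
    (hlim_right : Tendsto f (nhdsWithin 0 (Ioi 0)) (nhds (-1)))
    (hexp : ∀ x ∈ Icc (-1:ℝ) 1 \ {0}, f' x > Real.sqrt 2)
    (δ : ℝ) (hδ : 0 < δ) (hδ1 : δ ≤ 1) :
    ∃ ε > 0, ∀ c d, 0 ≤ c → c < d → d ≤ 1 →
      ∃ A B, -1 ≤ A ∧ B ≤ 1 ∧ Real.sqrt 2 * (d - c) ≤ B - A ∧
        (δ ≤ d - c → Real.sqrt 2 * (d - c) + ε ≤ B - A) ∧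
        Ioo A B ⊆ f '' Ioo c d ∧ (c = 0 → A = -1) := by
  set Fp : ℝ → ℝ := fun x => if x = 0 then (-1 : ℝ) else f x with hFpdef
  have hS : ∀ x : ℝ, 0 < x → x ≤ 1 → x ∈ Icc (-1:ℝ) 1 \ {0} := by
    intro x h1 h2
    exact ⟨⟨by linarith, h2⟩, by simp [ne_of_gt h1]⟩
  have hFpf : ∀ x : ℝ, x ≠ 0 → Fp x = f x := fun x hx => if_neg hx
  have hFp0 : Fp 0 = -1 := if_pos rfl
  -- continuity of Fp on [0,1]
  have hcont : ContinuousOn Fp (Icc 0 1) := by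
    intro x hx
    rcases eq_or_lt_of_le hx.1 with h0 | h0
    · -- x = 0
      subst h0
      have hle : 𝓝[Icc (0:ℝ) 1] 0 ≤ 𝓝[{(0:ℝ)} ∪ Ioi 0] 0 := by
        apply nhdsWithin_mono
        intro y hy
        rcases eq_or_lt_of_le hy.1 with h | h
        · exact Or.inl h.symm
        · exact Or.inr h
      rw [nhdsWithin_union, nhdsWithin_singleton] at hle
      have h1 : Tendsto Fp (pure (0:ℝ)) (𝓝 (-1)) := by
        rw [tendsto_pure_left]
        intro s hs
        rw [hFp0]
        exact mem_of_mem_nhds hs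
      have h2 : Tendsto Fp (𝓝[Ioi (0:ℝ)] 0) (𝓝 (-1)) := by
        apply hlim_right.congr'
        filter_upwards [self_mem_nhdsWithin] with y hy
        exact (hFpf y (ne_of_gt hy)).symm
      have := (tendsto_sup.2 ⟨h1, h2⟩).mono_left hle
      unfold ContinuousWithinAt
      rwa [hFp0]
    · -- 0 < x
      have hxS := hS x h0 hx.2
      have hmem : Icc (-1:ℝ) 1 \ {0} ∈ 𝓝[Icc (0:ℝ) 1] x := by
        rw [mem_nhdsWithin]
        refine ⟨Ioi 0, isOpen_Ioi, h0, ?_⟩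
        rintro y ⟨hy1, hy2⟩
        exact ⟨⟨by linarith [hy2.1], hy2.2⟩, ne_of_gt hy1⟩
      have hcw : ContinuousWithinAt f (Icc (0:ℝ) 1) x :=
        ((hderiv x hxS).continuousWithinAt).mono_of_mem_nhdsWithin hmem
      apply hcw.congr_of_eventuallyEq ?_ (hFpf x (ne_of_gt h0))
      filter_upwards [mem_nhdsWithin_of_mem_nhds (isOpen_Ioi.mem_nhds h0)] with y hy
      exact hFpf y (ne_of_gt hy)
  -- strict monotonicity of the defect
  have hGsm : StrictMonoOn (fun x => Fp x - Real.sqrt 2 * x) (Icc 0 1) := by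
    apply strictMonoOn_of_deriv_pos (convex_Icc 0 1)
    · exact hcont.sub ((continuous_const.mul continuous_id).continuousOn)
    · intro x hx
      rw [interior_Icc] at hx
      have hxS := hS x hx.1 hx.2.le
      have hnb : Icc (-1:ℝ) 1 \ {0} ∈ 𝓝 x := by
        rw [mem_nhds_iff]
        refine ⟨Ioo 0 1, ?_, isOpen_Ioo, hx⟩
        intro y hy
        exact ⟨⟨by linarith [hy.1], hy.2.le⟩, ne_of_gt hy.1⟩
      have h1 : HasDerivAt f (f' x) x := (hderiv x hxS).hasDerivAt hnb
      have h2 : HasDerivAt (fun y => f y - Real.sqrt 2 * y) (f' x - Real.sqrt 2) x := by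
        exact (h1.sub ((hasDerivAt_id x).const_mul (Real.sqrt 2))).congr_deriv (by ring)
      have hev : (fun y => Fp y - Real.sqrt 2 * y) =ᶠ[𝓝 x]
          (fun y => f y - Real.sqrt 2 * y) := by
        filter_upwards [isOpen_Ioi.mem_nhds hx.1] with y hy
        rw [hFpf y (ne_of_gt hy)]
      rw [hev.deriv_eq, h2.deriv]
      have := hexp x hxS
      linarith
  obtain ⟨ε, hε, hmain⟩ := lorenz_side_core Fp 0 1 δ hδ (by linarith) hcont hGsm
  refine ⟨ε, hε, fun c d hc hcd hd => ?_⟩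
  obtain ⟨h1, h2, h3⟩ := hmain c d hc hcd hd
  refine ⟨Fp c, Fp d, ?_, ?_, h1, h2, ?_, ?_⟩
  · rcases eq_or_lt_of_le hc with h0 | h0
    · rw [← h0, hFp0]
    · rw [hFpf c (ne_of_gt h0)]
      exact (hrange c (hS c h0 (by linarith))).1.le
  · rw [hFpf d (ne_of_gt (lt_of_le_of_lt hc hcd))]
    exact (hrange d (hS d (lt_of_le_of_lt hc hcd) hd)).2.le
  · intro y hy
    obtain ⟨x, hx, hxy⟩ := h3 hy
    exact ⟨x, hx, by rw [← hFpf x (ne_of_gt (lt_of_le_of_lt hc hx.1))]; exact hxy⟩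
  · intro h
    rw [h, hFp0]

lemma lorenz_stepL (f f' : ℝ → ℝ)
    (hderiv : ∀ x ∈ Icc (-1:ℝ) 1 \ {0},
      HasDerivWithinAt f (f' x) (Icc (-1:ℝ) 1 \ {0}) x)
    (hrange : ∀ x ∈ Icc (-1:ℝ) 1 \ {0}, f x ∈ Ioo (-1:ℝ) 1)
    (hlim_left : Tendsto f (nhdsWithin 0 (Iio 0)) (nhds 1))
    (hexp : ∀ x ∈ Icc (-1:ℝ) 1 \ {0}, f' x > Real.sqrt 2)
    (δ : ℝ) (hδ : 0 < δ) (hδ1 : δ ≤ 1) :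
    ∃ ε > 0, ∀ c d, -1 ≤ c → c < d → d ≤ 0 →
      ∃ A B, -1 ≤ A ∧ B ≤ 1 ∧ Real.sqrt 2 * (d - c) ≤ B - A ∧
        (δ ≤ d - c → Real.sqrt 2 * (d - c) + ε ≤ B - A) ∧
        Ioo A B ⊆ f '' Ioo c d ∧ (d = 0 → B = 1) := by
  set Fm : ℝ → ℝ := fun x => if x = 0 then (1 : ℝ) else f x with hFmdef
  have hS : ∀ x : ℝ, -1 ≤ x → x < 0 → x ∈ Icc (-1:ℝ) 1 \ {0} := by
    intro x h1 h2
    exact ⟨⟨h1, by linarith⟩, by simp [ne_of_lt h2]⟩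
  have hFmf : ∀ x : ℝ, x ≠ 0 → Fm x = f x := fun x hx => if_neg hx
  have hFm0 : Fm 0 = 1 := if_pos rfl
  -- continuity of Fm on [-1,0]
  have hcont : ContinuousOn Fm (Icc (-1) 0) := by
    intro x hx
    rcases eq_or_lt_of_le hx.2 with h0 | h0
    · -- x = 0
      rw [h0]
      have hle : 𝓝[Icc (-1:ℝ) 0] 0 ≤ 𝓝[{(0:ℝ)} ∪ Iio 0] 0 := by
        apply nhdsWithin_mono
        intro y hy
        rcases eq_or_lt_of_le hy.2 with h | h
        · exact Or.inl h
        · exact Or.inr h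
      rw [nhdsWithin_union, nhdsWithin_singleton] at hle
      have h1 : Tendsto Fm (pure (0:ℝ)) (𝓝 1) := by
        rw [tendsto_pure_left]
        intro s hs
        rw [hFm0]
        exact mem_of_mem_nhds hs
      have h2 : Tendsto Fm (𝓝[Iio (0:ℝ)] 0) (𝓝 1) := by
        apply hlim_left.congr'
        filter_upwards [self_mem_nhdsWithin] with y hy
        exact (hFmf y (ne_of_lt hy)).symm
      have := (tendsto_sup.2 ⟨h1, h2⟩).mono_left hle
      unfold ContinuousWithinAt
      rwa [hFm0]
    · -- x < 0
      have hxS := hS x hx.1 h0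
      have hmem : Icc (-1:ℝ) 1 \ {0} ∈ 𝓝[Icc (-1:ℝ) 0] x := by
        rw [mem_nhdsWithin]
        refine ⟨Iio 0, isOpen_Iio, h0, ?_⟩
        rintro y ⟨hy1, hy2⟩
        exact ⟨⟨hy2.1, by linarith [hy2.2]⟩, ne_of_lt hy1⟩
      have hcw : ContinuousWithinAt f (Icc (-1:ℝ) 0) x :=
        ((hderiv x hxS).continuousWithinAt).mono_of_mem_nhdsWithin hmem
      apply hcw.congr_of_eventuallyEq ?_ (hFmf x (ne_of_lt h0))
      filter_upwards [mem_nhdsWithin_of_mem_nhds (isOpen_Iio.mem_nhds h0)] with y hy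
      exact hFmf y (ne_of_lt hy)
  -- strict monotonicity of the defect
  have hGsm : StrictMonoOn (fun x => Fm x - Real.sqrt 2 * x) (Icc (-1) 0) := by
    apply strictMonoOn_of_deriv_pos (convex_Icc (-1) 0)
    · exact hcont.sub ((continuous_const.mul continuous_id).continuousOn)
    · intro x hx
      rw [interior_Icc] at hx
      have hxS := hS x hx.1.le hx.2
      have hnb : Icc (-1:ℝ) 1 \ {0} ∈ 𝓝 x := by
        rw [mem_nhds_iff]
        refine ⟨Ioo (-1) 0, ?_, isOpen_Ioo, hx⟩
        intro y hy
        exact ⟨⟨hy.1.le, by linarith [hy.2]⟩, ne_of_lt hy.2⟩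
      have h1 : HasDerivAt f (f' x) x := (hderiv x hxS).hasDerivAt hnb
      have h2 : HasDerivAt (fun y => f y - Real.sqrt 2 * y) (f' x - Real.sqrt 2) x := by
        exact (h1.sub ((hasDerivAt_id x).const_mul (Real.sqrt 2))).congr_deriv (by ring)
      have hev : (fun y => Fm y - Real.sqrt 2 * y) =ᶠ[𝓝 x]
          (fun y => f y - Real.sqrt 2 * y) := by
        filter_upwards [isOpen_Iio.mem_nhds hx.2] with y hy
        rw [hFmf y (ne_of_lt hy)]
      rw [hev.deriv_eq, h2.deriv]
      have := hexp x hxS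
      linarith
  obtain ⟨ε, hε, hmain⟩ := lorenz_side_core Fm (-1) 0 δ hδ (by linarith) hcont hGsm
  refine ⟨ε, hε, fun c d hc hcd hd => ?_⟩
  obtain ⟨h1, h2, h3⟩ := hmain c d hc hcd hd
  have hc0 : c < 0 := lt_of_lt_of_le hcd hd
  refine ⟨Fm c, Fm d, ?_, ?_, h1, h2, ?_, ?_⟩
  · rw [hFmf c (ne_of_lt hc0)]
    exact (hrange c (hS c hc hc0)).1.le
  · rcases eq_or_lt_of_le hd with h0 | h0
    · rw [h0, hFm0]
    · rw [hFmf d (ne_of_lt h0)]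
      exact (hrange d (hS d (by linarith) h0)).2.le
  · intro y hy
    obtain ⟨x, hx, hxy⟩ := h3 hy
    exact ⟨x, hx, by rw [← hFmf x (ne_of_lt (lt_of_lt_of_le hx.2 hd))]; exact hxy⟩
  · intro h
    rw [h, hFm0]

lemma lorenz_step (f f' : ℝ → ℝ)
    (hderiv : ∀ x ∈ Icc (-1:ℝ) 1 \ {0},
      HasDerivWithinAt f (f' x) (Icc (-1:ℝ) 1 \ {0}) x)
    (hrange : ∀ x ∈ Icc (-1:ℝ) 1 \ {0}, f x ∈ Ioo (-1:ℝ) 1)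
    (hlim_left : Tendsto f (nhdsWithin 0 (Iio 0)) (nhds 1))
    (hlim_right : Tendsto f (nhdsWithin 0 (Ioi 0)) (nhds (-1)))
    (hexp : ∀ x ∈ Icc (-1:ℝ) 1 \ {0}, f' x > Real.sqrt 2)
    (δ : ℝ) (hδ : 0 < δ) (hδ1 : δ ≤ 1) :
    ∃ ε > 0, ∀ c d, -1 ≤ c → c < d → d ≤ 1 → (d ≤ 0 ∨ 0 ≤ c) →
      ∃ A B, -1 ≤ A ∧ B ≤ 1 ∧ Real.sqrt 2 * (d - c) ≤ B - A ∧
        (δ ≤ d - c → Real.sqrt 2 * (d - c) + ε ≤ B - A) ∧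
        Ioo A B ⊆ f '' Ioo c d ∧ (c = 0 → A = -1) ∧ (d = 0 → B = 1) := by
  obtain ⟨εR, hεR, hR⟩ := lorenz_stepR f f' hderiv hrange hlim_right hexp δ hδ hδ1
  obtain ⟨εL, hεL, hL⟩ := lorenz_stepL f f' hderiv hrange hlim_left hexp δ hδ hδ1
  refine ⟨min εR εL, lt_min hεR hεL, fun c d hc hcd hd hside => ?_⟩
  rcases hside with h | h
  · obtain ⟨A, B, h1, h2, h3, h4, h5, h6⟩ := hL c d hc hcd h
    refine ⟨A, B, h1, h2, h3, fun hlen => ?_, h5, fun hc0 => absurd hc0 (by intro e; rw [e] at hcd; linarith), h6⟩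
    have := h4 hlen
    have := min_le_right εR εL
    linarith [min_le_right εR εL]
  · obtain ⟨A, B, h1, h2, h3, h4, h5, h6⟩ := hR c d h hcd hd
    refine ⟨A, B, h1, h2, h3, fun hlen => ?_, h5, h6,
      fun hd0 => absurd hd0 (by intro e; rw [e] at hcd; linarith)⟩
    have := h4 hlen
    linarith [min_le_left εR εL]


/-- Every Lorenz expanding map is eventually onto: for every open interval
`J ⊆ [-1,1] \ {0}` there is `N > 0` such that the union of the images of the
(partially defined) iterates `f^i`, `0 ≤ i ≤ N`, covers `(-1,1)`. -/
theorem lorenz_eventually_onto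
    (f f' : ℝ → ℝ)
    (hderiv : ∀ x ∈ Icc (-1:ℝ) 1 \ {0},
      HasDerivWithinAt f (f' x) (Icc (-1:ℝ) 1 \ {0}) x)
    (hrange : ∀ x ∈ Icc (-1:ℝ) 1 \ {0}, f x ∈ Ioo (-1:ℝ) 1)
    (hlim_left : Tendsto f (nhdsWithin 0 (Iio 0)) (nhds 1))
    (hlim_right : Tendsto f (nhdsWithin 0 (Ioi 0)) (nhds (-1)))
    (hexp : ∀ x ∈ Icc (-1:ℝ) 1 \ {0}, f' x > Real.sqrt 2)
    (a b : ℝ) (hab : a < b) (hJ : Ioo a b ⊆ Icc (-1:ℝ) 1 \ {0}) :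
    ∃ N : ℕ, 0 < N ∧
      Ioo (-1:ℝ) 1 ⊆
        ⋃ i ∈ Finset.range (N + 1),
          f^[i] '' {x ∈ Ioo a b | ∀ m < i, f^[m] x ≠ 0} := by
  -- the sets covered after `n` steps
  set U : ℕ → Set ℝ := fun n =>
    ⋃ i ∈ Finset.range (n + 1), f^[i] '' {x ∈ Ioo a b | ∀ m < i, f^[m] x ≠ 0} with hUdef
  have hUmono : ∀ {m n : ℕ}, m ≤ n → U m ⊆ U n := by
    intro m n h y hy
    simp only [hUdef, mem_iUnion, Finset.mem_range] at hy ⊢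
    obtain ⟨i, hi, hx⟩ := hy
    exact ⟨i, by omega, hx⟩
  have hU0 : Ioo a b ⊆ U 0 := by
    intro y hy
    simp only [hUdef, mem_iUnion, Finset.mem_range]
    exact ⟨0, by omega, y, ⟨hy, fun m hm => absurd hm (Nat.not_lt_zero m)⟩,
      Function.iterate_zero_apply f y⟩
  have hUsucc : ∀ {n : ℕ} {y : ℝ}, y ∈ U n → y ≠ 0 → f y ∈ U (n + 1) := by
    intro n y hy hy0
    simp only [hUdef, mem_iUnion, Finset.mem_range] at hy ⊢
    obtain ⟨i, hi, x, ⟨hxJ, hxm⟩, hxy⟩ := hy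
    refine ⟨i + 1, by omega, x, ⟨hxJ, ?_⟩, ?_⟩
    · intro m hm
      rcases Nat.lt_succ_iff_lt_or_eq.1 hm with h | h
      · exact hxm m h
      · rw [h, hxy]; exact hy0
    · rw [Function.iterate_succ_apply', hxy]
  have hmap : ∀ {n : ℕ} {c d : ℝ}, Ioo c d ⊆ U n → (d ≤ 0 ∨ 0 ≤ c) →
      f '' Ioo c d ⊆ U (n + 1) := by
    rintro n c d h hside y ⟨x, hx, rfl⟩
    refine hUsucc (h hx) ?_
    rcases hside with hs | hs
    · exact ne_of_lt (lt_of_lt_of_le hx.2 hs)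
    · exact ne_of_gt (lt_of_le_of_lt hs hx.1)
  -- basic facts about √2
  have hq0 : (0:ℝ) ≤ Real.sqrt 2 := Real.sqrt_nonneg 2
  have hq1 : (1:ℝ) < Real.sqrt 2 := by
    rw [show (1:ℝ) = Real.sqrt 1 by simp]
    exact Real.sqrt_lt_sqrt (by norm_num) (by norm_num)
  have hqq : Real.sqrt 2 * Real.sqrt 2 = 2 := Real.mul_self_sqrt (by norm_num)
  -- basic facts about a, b
  have hb1 : b ≤ 1 := by
    by_contra h
    push_neg at h
    have hx : (max a 1 + b) / 2 ∈ Ioo a b := by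
      have h1 := le_max_left a 1
      have h2 := le_max_right a 1
      have hlt : max a 1 < b := max_lt (by linarith) h
      exact ⟨by linarith, by linarith⟩
    have := (hJ hx).1.2
    have := le_max_right a 1
    linarith
  have ha1 : -1 ≤ a := by
    by_contra h
    push_neg at h
    have hx : (a + min b (-1)) / 2 ∈ Ioo a b := by
      constructor
      · have := min_le_right b (-1)
        have hlt : a < min b (-1) := lt_min hab (by linarith)
        linarith
      · have := min_le_left b (-1); linarith [min_le_left b (-1)]
    have := (hJ hx).1.1
    have := min_le_right b (-1)
    linarith
  have hside0 : b ≤ 0 ∨ 0 ≤ a := by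
    by_contra h
    push_neg at h
    obtain ⟨h1, h2⟩ := h
    exact (hJ ⟨h2, h1⟩).2 rfl
  have hδ1 : b - a ≤ 1 := by rcases hside0 with h | h <;> linarith
  -- the expansion step
  obtain ⟨ε, hε, hSL⟩ := lorenz_step f f' hderiv hrange hlim_left hlim_right hexp
    (b - a) (by linarith) hδ1
  -- finishing lemmas
  have hFIN1 : ∀ (n : ℕ) (B : ℝ), 0 < B → Ioo (-1:ℝ) B ⊆ U n →
      ∃ N, Ioo (-1:ℝ) 1 ⊆ U N := by
    intro n B hB h
    obtain ⟨A₂, B₂, hA₂, hB₂, hlen, -, himg, -, hBeq⟩ :=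
      hSL (-1) 0 le_rfl (by norm_num) (by norm_num) (Or.inl le_rfl)
    have hB₂1 : B₂ = 1 := hBeq rfl
    have h0 : Ioo (-1:ℝ) 0 ⊆ U n := fun x hx => h ⟨hx.1, lt_trans hx.2 hB⟩
    have himg' : Ioo A₂ B₂ ⊆ U (n + 1) := himg.trans (hmap h0 (Or.inl le_rfl))
    have hA₂' : A₂ < 0 := by rw [hB₂1] at hlen; linarith
    refine ⟨n + 1, fun x hx => ?_⟩
    rcases lt_or_ge x B with h' | h'
    · exact hUmono (Nat.le_succ n) (h ⟨hx.1, h'⟩)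
    · exact himg' ⟨by linarith, by rw [hB₂1]; exact hx.2⟩
  have hFIN2 : ∀ (n : ℕ) (A : ℝ), A < 0 → Ioo A 1 ⊆ U n →
      ∃ N, Ioo (-1:ℝ) 1 ⊆ U N := by
    intro n A hA h
    obtain ⟨A₂, B₂, hA₂, hB₂, hlen, -, himg, hAeq, -⟩ :=
      hSL 0 1 (by norm_num) (by norm_num) le_rfl (Or.inr le_rfl)
    have hA₂1 : A₂ = -1 := hAeq rfl
    have h0 : Ioo (0:ℝ) 1 ⊆ U n := fun x hx => h ⟨lt_trans hA hx.1, hx.2⟩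
    have himg' : Ioo A₂ B₂ ⊆ U (n + 1) := himg.trans (hmap h0 (Or.inr le_rfl))
    have hB₂' : 0 < B₂ := by rw [hA₂1] at hlen; linarith
    refine ⟨n + 1, fun x hx => ?_⟩
    rcases lt_or_ge A x with h' | h'
    · exact hUmono (Nat.le_succ n) (h ⟨h', hx.2⟩)
    · exact himg' ⟨by rw [hA₂1]; exact hx.1, by linarith⟩
  -- the double step: either finish, or grow by ε/2 in two steps
  have hDS : ∀ (n : ℕ) (c d : ℝ), -1 ≤ c → c < d → d ≤ 1 → (d ≤ 0 ∨ 0 ≤ c) →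
      Ioo c d ⊆ U n → b - a ≤ d - c →
      (∃ N, Ioo (-1:ℝ) 1 ⊆ U N) ∨
      ∃ c' d', -1 ≤ c' ∧ c' < d' ∧ d' ≤ 1 ∧ (d' ≤ 0 ∨ 0 ≤ c') ∧
        Ioo c' d' ⊆ U (n + 2) ∧ (d - c) + ε / 2 ≤ d' - c' := by
    intro n c d h1 h2 h3 hside hsub hlen
    obtain ⟨A, B, hA, hB, hplain, hgain, himg, -, -⟩ := hSL c d h1 h2 h3 hside
    have hAB : Real.sqrt 2 * (d - c) + ε ≤ B - A := hgain hlen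
    have hdc : 0 < d - c := by linarith
    have hABlt : A < B := by nlinarith
    have hU1 : Ioo A B ⊆ U (n + 1) := himg.trans (hmap hsub hside)
    by_cases h0 : A < 0 ∧ 0 < B
    · obtain ⟨hA0, hB0⟩ := h0
      rcases le_or_gt B (-A) with hhalf | hhalf
      · -- take the half (A, 0)
        obtain ⟨A₂, B₂, hA₂, hB₂, hplain₂, -, himg₂, -, hBeq₂⟩ :=
          hSL A 0 hA hA0 (by norm_num) (Or.inl le_rfl)
        have hB₂1 : B₂ = 1 := hBeq₂ rfl
        have hU2 : Ioo A₂ B₂ ⊆ U (n + 2) :=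
          himg₂.trans (hmap ((Ioo_subset_Ioo le_rfl hB0.le).trans hU1) (Or.inl le_rfl))
        have hkey : Real.sqrt 2 * ((Real.sqrt 2 * (d - c) + ε) / 2) ≤
            Real.sqrt 2 * (0 - A) := by
          apply mul_le_mul_of_nonneg_left _ hq0
          linarith
        have hlen₂ : (d - c) + ε / 2 ≤ B₂ - A₂ := by nlinarith
        rcases lt_or_ge A₂ 0 with hc | hc
        · exact Or.inl (hFIN2 (n + 2) A₂ hc (by rw [hB₂1] at hU2; exact hU2))
        · refine Or.inr ⟨A₂, B₂, hA₂, by nlinarith, hB₂, Or.inr hc, hU2, hlen₂⟩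
      · -- take the half (0, B)
        obtain ⟨A₂, B₂, hA₂, hB₂, hplain₂, -, himg₂, hAeq₂, -⟩ :=
          hSL 0 B (by norm_num) hB0 (by linarith) (Or.inr le_rfl)
        have hA₂1 : A₂ = -1 := hAeq₂ rfl
        have hU2 : Ioo A₂ B₂ ⊆ U (n + 2) :=
          himg₂.trans (hmap ((Ioo_subset_Ioo hA0.le le_rfl).trans hU1) (Or.inr le_rfl))
        have hkey : Real.sqrt 2 * ((Real.sqrt 2 * (d - c) + ε) / 2) ≤
            Real.sqrt 2 * (B - 0) := by
          apply mul_le_mul_of_nonneg_left _ hq0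
          linarith
        have hlen₂ : (d - c) + ε / 2 ≤ B₂ - A₂ := by nlinarith
        rcases lt_or_ge 0 B₂ with hc | hc
        · exact Or.inl (hFIN1 (n + 2) B₂ hc (by rw [hA₂1] at hU2; exact hU2))
        · refine Or.inr ⟨A₂, B₂, hA₂, by nlinarith, hB₂, Or.inl hc, hU2, hlen₂⟩
    · -- no splitting needed
      have hside' : B ≤ 0 ∨ 0 ≤ A := by
        rcases lt_or_ge A 0 with h | h
        · rcases lt_or_ge 0 B with h' | h'
          · exact absurd ⟨h, h'⟩ h0
          · exact Or.inl h'
        · exact Or.inr h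
      exact Or.inr ⟨A, B, hA, hABlt, hB, hside',
        (hU1.trans (hUmono (by omega))), by nlinarith⟩
  -- the induction on the number of double steps
  have IND : ∀ (k n : ℕ) (c d : ℝ), -1 ≤ c → c < d → d ≤ 1 → (d ≤ 0 ∨ 0 ≤ c) →
      Ioo c d ⊆ U n → b - a ≤ d - c → 2 - (d - c) ≤ k * (ε / 2) →
      ∃ N, Ioo (-1:ℝ) 1 ⊆ U N := by
    intro k
    induction k with
    | zero =>
      intro n c d h1 h2 h3 hside _ _ hk
      exfalso
      simp only [Nat.cast_zero, zero_mul] at hk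
      rcases hside with h | h <;> linarith
    | succ k ih =>
      intro n c d h1 h2 h3 hside hsub hlen hk
      rcases hDS n c d h1 h2 h3 hside hsub hlen with h | ⟨c', d', g1, g2, g3, g4, g5, g6⟩
      · exact h
      · refine ih (n + 2) c' d' g1 g2 g3 g4 g5 (by linarith) ?_
        push_cast at hk ⊢
        linarith
  -- conclude
  obtain ⟨k, hk⟩ := exists_nat_ge (2 / (ε / 2))
  have hk' : 2 - (b - a) ≤ k * (ε / 2) := by
    have h2 : (2:ℝ) ≤ k * (ε / 2) := by
      rw [div_le_iff₀ (by linarith)] at hk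
      linarith
    linarith
  obtain ⟨N, hN⟩ := IND k 0 a b ha1 hab hb1 hside0 hU0 le_rfl hk'
  have hfin : Ioo (-1:ℝ) 1 ⊆ U (N + 1) := hN.trans (hUmono (Nat.le_succ N))
  exact ⟨N + 1, N.succ_pos, hfin⟩
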